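/- arXiv:2204.05947 — 4 statements merged into one kernel-verified Lean document; each statement's English description precedes it below -/
import Mathlib

section
/- If for each k, the conditional expectation of Y^k given (S^1 = s_1, ..., S^K = s_K) equals s_k for all (s_1,...,s_K), then for any weights w_1,...,w_K, the composite score S = Σ_k w_k S^k is calibrated for the composite outcome Y = Σ_k w_k Y^k, i.e., E(Y | S = s) = s for all s. -/
open MeasureTheory ProbabilityTheory

/-- If `E(Y^k | S^1,...,S^K) = S^k` a.s. for each `k`, then the composite
score `S = Σ_k w_k S^k` is calibrated for the composite outcome `Y = Σ_k w_k Y^k`: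
`E(Y | S) = S` a.s. -/
theorem composite_calibration
    {Ω : Type*} [MeasurableSpace Ω] (μ : Measure Ω) [IsProbabilityMeasure μ]
    (K : ℕ) (Y S : Fin K → Ω → ℝ) (w : Fin K → ℝ)
    (hSmeas : ∀ k, Measurable (S k)) (hYint : ∀ k, Integrable (Y k) μ)
    (hcal : ∀ k,
      μ[Y k | MeasurableSpace.comap (fun ω => fun k => S k ω) inferInstance] =ᵐ[μ] S k) :
    μ[(fun ω => ∑ k, w k * Y k ω) |
        MeasurableSpace.comap (fun ω => ∑ k, w k * S k ω) inferInstance] =ᵐ[μ]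
      (fun ω => ∑ k, w k * S k ω) := by
  have hvec : Measurable (fun ω => fun k => S k ω) :=
    measurable_pi_lambda _ fun k => hSmeas k
  have hsum : Measurable (fun ω => ∑ k, w k * S k ω) :=
    Finset.measurable_sum _ fun k _ => (hSmeas k).const_mul _
  set m2 : MeasurableSpace Ω :=
    MeasurableSpace.comap (fun ω => fun k => S k ω) inferInstance with hm2
  set m1 : MeasurableSpace Ω :=
    MeasurableSpace.comap (fun ω => ∑ k, w k * S k ω) inferInstance with hm1
  have hm2le := hvec.comap_le
  have hm1le := hsum.comap_le
  -- m1 ≤ m2 : the weighted sum factors through the vector of scores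
  have hm12 : m1 ≤ m2 := by
    have : (fun ω => ∑ k, w k * S k ω) =
        (fun v : Fin K → ℝ => ∑ k, w k * v k) ∘ (fun ω => fun k => S k ω) := rfl
    rw [hm1, this, ← MeasurableSpace.comap_comp]
    exact MeasurableSpace.comap_mono
      ((Finset.measurable_sum _ fun k _ => (measurable_pi_apply k).const_mul _).comap_le)
  have hYsum : Integrable (fun ω => ∑ k, w k * Y k ω) μ :=
    integrable_finset_sum _ fun k _ => ((hYint k).const_mul _)
  -- E[Y | m2] = S a.e.
  have hE2 : μ[(fun ω => ∑ k, w k * Y k ω) | m2] =ᵐ[μ] (fun ω => ∑ k, w k * S k ω) := by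
    have hfun : (fun ω => ∑ k, w k * Y k ω) = ∑ k, (fun ω => w k * Y k ω) := by
      ext ω; simp
    have h1 : μ[(fun ω => ∑ k, w k * Y k ω) | m2]
        =ᵐ[μ] fun ω => ∑ k, (μ[(fun ω' => w k * Y k ω') | m2]) ω := by
      rw [hfun]
      have := condExp_finset_sum (s := Finset.univ)
        (f := fun k ω => w k * Y k ω) (fun k _ => (hYint k).const_mul _) (m := m2) (μ := μ)
      filter_upwards [this] with ω hω
      simpa using hω
    have h2 : ∀ k : Fin K, μ[(fun ω' => w k * Y k ω') | m2] =ᵐ[μ] fun ω => w k * S k ω := by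
      intro k
      have hs : μ[(fun ω' => w k * Y k ω') | m2] =ᵐ[μ] w k • μ[Y k | m2] := by
        have := condExp_smul (μ := μ) (m := m2) (w k) (Y k)
        have e : (w k • Y k) = (fun ω' => w k * Y k ω') := rfl
        rw [e] at this
        filter_upwards [this] with ω hω
        simpa [smul_eq_mul] using hω
      filter_upwards [hs, hcal k] with ω h1 h2
      simp [h1, Pi.smul_apply, smul_eq_mul, h2]
    have h3 : (fun ω => ∑ k, (μ[(fun ω' => w k * Y k ω') | m2]) ω)
        =ᵐ[μ] fun ω => ∑ k, w k * S k ω := by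
      have := ae_all_iff.2 fun k => h2 k
      filter_upwards [this] with ω hω
      exact Finset.sum_congr rfl fun k _ => hω k
    exact h1.trans h3
  -- tower property
  have htower : μ[μ[(fun ω => ∑ k, w k * Y k ω)|m2] | m1]
      =ᵐ[μ] μ[(fun ω => ∑ k, w k * Y k ω) | m1] :=
    condExp_condExp_of_le hm12 hm2le
  have hstep : μ[(fun ω => ∑ k, w k * Y k ω) | m1]
      =ᵐ[μ] μ[(fun ω => ∑ k, w k * S k ω) | m1] :=
    htower.symm.trans (condExp_congr_ae hE2)
  have hSint : ∀ k, Integrable (S k) μ := fun k =>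
    (integrable_condExp (m := m2)).congr (hcal k)
  have hfinal : μ[(fun ω => ∑ k, w k * S k ω) | m1] =ᵐ[μ] (fun ω => ∑ k, w k * S k ω) := by
    have := condExp_of_stronglyMeasurable (μ := μ) hm1le
      (f := fun ω => ∑ k, w k * S k ω) ?_ ?_
    · rw [this]
    · exact Measurable.stronglyMeasurable (fun s hs => MeasurableSpace.measurableSet_comap.2 ⟨s, hs, rfl⟩)
    · exact integrable_finset_sum _ fun k _ => ((hSint k).const_mul _)
  exact hstep.trans hfinal
end

section
/- If transformed scores are defined by T^k = E(Y^k | S^1,...,S^K, G), then for any weights w_1,...,w_K the composite transformed score T = Σ_k w_k T^k satisfies E(Σ_k w_k Y^k | T, G) = T almost surely; in particular this conditional expectation is the same function of T on every group, so the composite model satisfies predictive rate parity across groups. -/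
open MeasureTheory ProbabilityTheory

private lemma aux_parity {Ω : Type*} {m0 m m' : MeasurableSpace Ω}
    (μ : @Measure Ω m0) [IsProbabilityMeasure μ]
    (hm : m ≤ m0) (hm'm : m' ≤ m)
    {f g : Ω → ℝ} (hfg : μ[f|m] =ᵐ[μ] g)
    (hg : StronglyMeasurable[m'] g) (hgint : Integrable g μ) :
    μ[f|m'] =ᵐ[μ] g := by
  calc μ[f|m'] =ᵐ[μ] μ[μ[f|m]|m'] := (condExp_condExp_of_le hm'm hm).symm
    _ =ᵐ[μ] μ[g|m'] := condExp_congr_ae hfg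
    _ =ᵐ[μ] g := by rw [condExp_of_stronglyMeasurable (hm'm.trans hm) hg hgint]

/-- With transformed scores `T^k = E(Y^k | S^1,...,S^K, G)` and composite
transformed score `T = Σ_k w_k T^k`, we have `E(Σ_k w_k Y^k | T, G) = T` a.s.; in
particular the conditional expectation of the composite outcome given `(T, G)` equals `T`
on every group, so the composite model satisfies predictive rate parity across groups. -/
theorem multiobjective_parity
    {Ω γ : Type*} [MeasurableSpace Ω] [MeasurableSpace γ]
    (μ : Measure Ω) [IsProbabilityMeasure μ]
    (K : ℕ) (Y S : Fin K → Ω → ℝ) (G : Ω → γ) (w : Fin K → ℝ)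
    (hSmeas : ∀ k, Measurable (S k)) (hGmeas : Measurable G)
    (hYint : ∀ k, Integrable (Y k) μ)
    (T : Fin K → Ω → ℝ)
    (hT : ∀ k, T k =
      μ[Y k | MeasurableSpace.comap (fun ω => (fun k => S k ω, G ω)) inferInstance]) :
    μ[(fun ω => ∑ k, w k * Y k ω) |
        MeasurableSpace.comap (fun ω => (∑ k, w k * T k ω, G ω)) inferInstance] =ᵐ[μ]
      (fun ω => ∑ k, w k * T k ω) := by
  have hpair : Measurable (fun ω => (fun k => S k ω, G ω)) :=
    (measurable_pi_lambda _ fun k => hSmeas k).prodMk hGmeas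
  have hm := hpair.comap_le
  let m : MeasurableSpace Ω :=
    MeasurableSpace.comap (fun ω => (fun k => S k ω, G ω)) inferInstance
  let m' : MeasurableSpace Ω :=
    MeasurableSpace.comap (fun ω => (∑ k, w k * T k ω, G ω)) inferInstance
  have hTk_meas : ∀ k, StronglyMeasurable[m] (T k) := by
    intro k; rw [hT k]; exact stronglyMeasurable_condExp
  have hfT_meas_m : Measurable[m] (fun ω => ∑ k, w k * T k ω) := by
    apply Finset.measurable_sum
    intro k _
    exact measurable_const.mul (hTk_meas k).measurable
  have hpair_m : Measurable[m] (fun ω => (fun k => S k ω, G ω)) :=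
    Measurable.of_comap_le le_rfl
  have hG_meas_m : Measurable[m] G := measurable_snd.comp hpair_m
  have hm'm : m' ≤ m := (hfT_meas_m.prodMk hG_meas_m).comap_le
  have hpair_m' : Measurable[m'] (fun ω => (∑ k, w k * T k ω, G ω)) :=
    Measurable.of_comap_le le_rfl
  have hfT_meas_m' : StronglyMeasurable[m'] (fun ω => ∑ k, w k * T k ω) :=
    (measurable_fst.comp hpair_m').stronglyMeasurable
  have hTk_int : ∀ k, Integrable (T k) μ := by
    intro k; rw [hT k]; exact integrable_condExp
  have hfT_int : Integrable (fun ω => ∑ k, w k * T k ω) μ :=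
    integrable_finset_sum _ fun k _ => (hTk_int k).const_mul _
  refine aux_parity μ hm hm'm ?_ hfT_meas_m' hfT_int
  -- E[Σ w Y | m] = Σ w T
  have hfun : (fun ω => ∑ k, w k * Y k ω) = ∑ k, (fun ω => w k * Y k ω) := by
    funext ω; simp
  have h1 : μ[(fun ω => ∑ k, w k * Y k ω) | m]
      =ᵐ[μ] ∑ k, μ[(fun ω => w k * Y k ω) | m] := by
    rw [hfun]
    exact condExp_finset_sum (fun k _ => (hYint k).const_mul _) m
  refine h1.trans ?_
  have h2 : ∀ k : Fin K, μ[(fun ω => w k * Y k ω) | m] =ᵐ[μ] fun ω => w k * T k ω := by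
    intro k
    have := condExp_smul (μ := μ) (m := m) (𝕜 := ℝ) (w k) (Y k)
    rw [hT k]
    refine this.mono fun ω hω => ?_
    exact hω
  have h3 : ∀ᵐ ω ∂μ, ∀ k : Fin K,
      (μ[(fun ω => w k * Y k ω) | m]) ω = w k * T k ω := ae_all_iff.2 h2
  refine h3.mono fun ω hω => ?_
  simp only [Finset.sum_apply]
  exact Finset.sum_congr rfl fun k _ => hω k
end

section
/- If the score S of group g_1 is a.s. equal to a constant s_1 and the score of group g_2 is a.s. equal to a different constant s_2 with s_2 > s_1, and E(Y | G=g_1) > E(Y | G=g_2), then the model vacuously satisfies the naive conditional-expectation equality formulation of predictive rate parity (the conditional expectations agree on the common support, which is empty), yet fails Definition 2's ordering condition: P(B(O_{g_1}, O_{g_2})) > 0. -/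
open MeasureTheory

/-- If the score of group `g₁` is a.s. a constant `s₁` with conditional
expected outcome `o₁`, the score of group `g₂` is a.s. a constant `s₂ > s₁` with
conditional expected outcome `o₂ < o₁`, then the naive formulation of predictive rate
parity is vacuously satisfied (the supports are disjoint), yet the ordering condition of
Definition 2 fails: the bad-ordering event
`B = {ω : O_{g₁}(ω) > O_{g₂}(ω) ∧ S_{g₁}(ω) < S_{g₂}(ω)}` has positive probability. -/
theorem ordering_condition_fails
    {Ω : Type*} [MeasurableSpace Ω] (μ : Measure Ω) [IsProbabilityMeasure μ]
    (O₁ O₂ S₁ S₂ : Ω → ℝ) (o₁ o₂ s₁ s₂ : ℝ)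
    (hO₁ : O₁ =ᵐ[μ] fun _ => o₁) (hO₂ : O₂ =ᵐ[μ] fun _ => o₂)
    (hS₁ : S₁ =ᵐ[μ] fun _ => s₁) (hS₂ : S₂ =ᵐ[μ] fun _ => s₂)
    (hs : s₁ < s₂) (ho : o₂ < o₁) :
    0 < μ {ω | O₁ ω > O₂ ω ∧ S₁ ω < S₂ ω} := by
  have h : ∀ᵐ ω ∂μ, O₁ ω > O₂ ω ∧ S₁ ω < S₂ ω := by
    filter_upwards [hO₁, hO₂, hS₁, hS₂] with ω h1 h2 h3 h4
    simp only [h1, h2, h3, h4]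
    exact ⟨ho, hs⟩
  have hzero := ae_iff.mp h
  by_contra hc
  push_neg at hc
  have hle : μ {ω | O₁ ω > O₂ ω ∧ S₁ ω < S₂ ω} = 0 := le_antisymm hc zero_le
  have : μ Set.univ ≤ μ {ω | ¬(O₁ ω > O₂ ω ∧ S₁ ω < S₂ ω)} + μ {ω | O₁ ω > O₂ ω ∧ S₁ ω < S₂ ω} := by
    apply le_trans (measure_mono _) (measure_union_le _ _)
    intro ω _; by_cases hw : O₁ ω > O₂ ω ∧ S₁ ω < S₂ ω
    · exact Or.inr hw
    · exact Or.inl hw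
  rw [hzero, hle, measure_univ] at this
  simp at this
end

section
/- If each individual score is calibrated marginally (E(Y^k | S^k) = S^k a.s. for each k) but not jointly, the composite score S = Σ w_k S^k need not be calibrated for Y = Σ w_k Y^k: there exist random variables (Y^1, Y^2, S^1, S^2) and weights with E(Y^k | S^k) = S^k for k = 1,2 yet E(Y^1 + Y^2 | S^1 + S^2) ≠ S^1 + S^2 with positive probability. -/
open MeasureTheory

/-- Marginal calibration of individual scores does not imply composite
calibration: there exist random variables `(Y¹, Y², S¹, S²)` with `E(Yᵏ | Sᵏ) = Sᵏ` a.s.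
for `k = 1, 2`, yet `E(Y¹ + Y² | S¹ + S²) ≠ S¹ + S²` on a set of positive measure. -/
theorem marginal_calibration_insufficient :
    ∃ (Ω : Type) (_ : MeasurableSpace Ω) (μ : Measure Ω) (_ : IsProbabilityMeasure μ)
      (Y₁ Y₂ S₁ S₂ : Ω → ℝ),
      Integrable Y₁ μ ∧ Integrable Y₂ μ ∧ Measurable S₁ ∧ Measurable S₂ ∧
      μ[Y₁ | MeasurableSpace.comap S₁ inferInstance] =ᵐ[μ] S₁ ∧
      μ[Y₂ | MeasurableSpace.comap S₂ inferInstance] =ᵐ[μ] S₂ ∧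
      ¬ (μ[(fun ω => Y₁ ω + Y₂ ω) |
            MeasurableSpace.comap (fun ω => S₁ ω + S₂ ω) inferInstance] =ᵐ[μ]
          fun ω => S₁ ω + S₂ ω) := by
  classical
  refine ⟨Bool, inferInstance, (PMF.uniformOfFintype Bool).toMeasure, inferInstance,
    (fun b => if b then 1 else 0), (fun b => if b then 1 else 0),
    (fun b => if b then 1 else 0), (fun _ => (1:ℝ)/2), ?_, ?_, ?_, ?_, ?_, ?_, ?_⟩
  · exact Integrable.of_finite
  · exact Integrable.of_finite
  · exact measurable_from_top
  · exact measurable_from_top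
  · -- Y₁ is σ(S₁)-measurable, so condexp is itself
    set μ := (PMF.uniformOfFintype Bool).toMeasure
    have hm : MeasurableSpace.comap (fun b : Bool => if b then (1:ℝ) else 0) inferInstance
        ≤ (inferInstance : MeasurableSpace Bool) := Measurable.comap_le measurable_from_top
    have hsm : StronglyMeasurable[MeasurableSpace.comap
        (fun b : Bool => if b then (1:ℝ) else 0) inferInstance]
        (fun b : Bool => if b then (1:ℝ) else 0) :=
      (Measurable.of_comap_le le_rfl).stronglyMeasurable
    rw [condExp_of_stronglyMeasurable hm hsm Integrable.of_finite]
  · -- σ(S₂) is trivial; E Y₂ = 1/2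
    set μ := (PMF.uniformOfFintype Bool).toMeasure
    rw [MeasurableSpace.comap_const, condExp_bot]
    have : ∫ b : Bool, (if b then (1:ℝ) else 0) ∂μ = 1/2 := by
      rw [integral_fintype Integrable.of_finite]
      have h : ∀ b : Bool, μ {b} = 1/2 := by
        intro b
        simp [μ, PMF.toMeasure_apply_singleton _ _ (measurableSet_singleton b),
          PMF.uniformOfFintype_apply]
      simp [Measure.real, h]
    filter_upwards with b
    rw [this]
  · -- negation
    set μ := (PMF.uniformOfFintype Bool).toMeasure
    intro h
    have hm : MeasurableSpace.comap
        (fun b : Bool => (if b then (1:ℝ) else 0) + 1/2) inferInstance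
        ≤ (inferInstance : MeasurableSpace Bool) := Measurable.comap_le measurable_from_top
    have hsm : StronglyMeasurable[MeasurableSpace.comap
        (fun b : Bool => (if b then (1:ℝ) else 0) + 1/2) inferInstance]
        (fun b : Bool => (if b then (1:ℝ) else 0) + (if b then (1:ℝ) else 0)) := by
      have h1 : Measurable[MeasurableSpace.comap
          (fun b : Bool => (if b then (1:ℝ) else 0) + 1/2) inferInstance]
          (fun b : Bool => (if b then (1:ℝ) else 0) + 1/2) :=
        Measurable.of_comap_le le_rfl
      have h2 : (fun b : Bool => (if b then (1:ℝ) else 0) + (if b then (1:ℝ) else 0))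
          = (fun x : ℝ => 2 * (x - 1/2)) ∘ (fun b : Bool => (if b then (1:ℝ) else 0) + 1/2) := by
        funext b; cases b <;> simp <;> ring
      rw [h2]
      exact ((measurable_id.sub measurable_const).const_mul 2).comp h1 |>.stronglyMeasurable
    rw [condExp_of_stronglyMeasurable hm hsm Integrable.of_finite] at h
    -- now h : (fun b => ite + ite) =ᵐ[μ] fun b => ite + 1/2, but they differ everywhere
    have : μ {b : Bool | ¬ ((if b then (1:ℝ) else 0) + (if b then (1:ℝ) else 0)
        = (if b then (1:ℝ) else 0) + 1/2)} = 0 := by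
      exact ae_iff.mp h
    have huniv : {b : Bool | ¬ ((if b then (1:ℝ) else 0) + (if b then (1:ℝ) else 0)
        = (if b then (1:ℝ) else 0) + 1/2)} = Set.univ := by
      ext b; cases b <;> simp <;> norm_num
    rw [huniv] at this
    have := measure_univ (μ := μ)
    simp_all
end
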